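/- Let (p_1, q_1), …, (p_m, q_m) and (p_1', q_1'), …, (p_n', q_n') be pairs of coprime integers with 1 < p_i < q_i and 1 < p_j' < q_j' for all i, j, and let P(X) ∈ ℤ[X] be a polynomial whose constant coefficient is 1 and whose coefficient of X is −1. If Δ_{p_1,q_1}(X) ⋯ Δ_{p_m,q_m}(X) = P(X) · Δ_{p_1',q_1'}(X) ⋯ Δ_{p_n',q_n'}(X) in ℤ[X], then m = n + 1. -/

import Mathlib

open Polynomial

lemma coeff1_mul (a b : ℤ[X]) :
    (a * b).coeff 1 = a.coeff 0 * b.coeff 1 + a.coeff 1 * b.coeff 0 := by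
  rw [Polynomial.coeff_mul]
  simp [Finset.Nat.antidiagonal_succ, Prod.map]

lemma delta_coeffs {pp qq : ℕ} (hp : 1 < pp) (hq : pp < qq) (Δ : ℤ[X])
    (h : Δ * ((X ^ pp - 1) * (X ^ qq - 1)) = (X ^ (pp * qq) - 1) * (X - 1)) :
    Δ.coeff 0 = 1 ∧ Δ.coeff 1 = -1 := by
  have hpp0 : pp ≠ 0 := by omega
  have hqq0 : qq ≠ 0 := by omega
  have hpp1 : pp ≠ 1 := by omega
  have hqq1 : qq ≠ 1 := by omega
  have hm0 : pp * qq ≠ 0 := by positivity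
  have hm1 : pp * qq ≠ 1 := by
    nlinarith
  have g0 : ((X ^ pp - 1 : ℤ[X]) * (X ^ qq - 1)).coeff 0 = 1 := by
    rw [Polynomial.mul_coeff_zero]
    simp [Polynomial.coeff_X_pow, Ne.symm hpp0, Ne.symm hqq0]
  have g1 : ((X ^ pp - 1 : ℤ[X]) * (X ^ qq - 1)).coeff 1 = 0 := by
    rw [coeff1_mul]
    simp [Polynomial.coeff_X_pow, Polynomial.coeff_one, Ne.symm hpp0, Ne.symm hqq0, Ne.symm hpp1, Ne.symm hqq1]
  have r0 : ((X ^ (pp * qq) - 1 : ℤ[X]) * (X - 1)).coeff 0 = 1 := by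
    rw [Polynomial.mul_coeff_zero]
    simp [Polynomial.coeff_X_pow, hm0, hpp0, hqq0]
  have r1 : ((X ^ (pp * qq) - 1 : ℤ[X]) * (X - 1)).coeff 1 = -1 := by
    rw [coeff1_mul]
    simp [Polynomial.coeff_X_pow, Polynomial.coeff_one, hpp0, hqq0, Ne.symm hm1]
  have e0 : Δ.coeff 0 = 1 := by
    have := congrArg (fun f => Polynomial.coeff f 0) h
    simp only [Polynomial.mul_coeff_zero, g0, r0] at this
    simpa using this
  have e1 : Δ.coeff 1 = -1 := by
    have := congrArg (fun f => Polynomial.coeff f 1) h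
    rw [coeff1_mul, g0, g1, r1] at this
    linarith
  exact ⟨e0, e1⟩

lemma prod_coeffs {ι : Type*} (s : Finset ι) (f : ι → ℤ[X])
    (h0 : ∀ i ∈ s, (f i).coeff 0 = 1) :
    (∏ i ∈ s, f i).coeff 0 = 1 ∧ (∏ i ∈ s, f i).coeff 1 = ∑ i ∈ s, (f i).coeff 1 := by
  induction s using Finset.cons_induction with
  | empty => simp [Polynomial.coeff_one]
  | cons a s ha ih =>
    obtain ⟨c0, c1⟩ := ih (fun i hi => h0 i (Finset.mem_cons_of_mem hi))
    have ha0 := h0 a (Finset.mem_cons_self a s)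
    rw [Finset.prod_cons, Finset.sum_cons]
    constructor
    · rw [Polynomial.mul_coeff_zero, ha0, c0, one_mul]
    · rw [coeff1_mul, ha0, c0, c1]; ring

theorem torus_knot_sum_count (m n : ℕ)
    (p q : Fin m → ℕ) (p' q' : Fin n → ℕ)
    (hp : ∀ i, 1 < p i) (hpq : ∀ i, p i < q i) (hcop : ∀ i, Nat.Coprime (p i) (q i))
    (hp' : ∀ j, 1 < p' j) (hpq' : ∀ j, p' j < q' j) (hcop' : ∀ j, Nat.Coprime (p' j) (q' j))
    (Δ : Fin m → ℤ[X]) (Δ' : Fin n → ℤ[X])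
    (hΔ : ∀ i, Δ i * ((X ^ p i - 1) * (X ^ q i - 1)) = (X ^ (p i * q i) - 1) * (X - 1))
    (hΔ' : ∀ j, Δ' j * ((X ^ p' j - 1) * (X ^ q' j - 1)) = (X ^ (p' j * q' j) - 1) * (X - 1))
    (P : ℤ[X]) (hP0 : P.coeff 0 = 1) (hP1 : P.coeff 1 = -1)
    (heq : ∏ i, Δ i = P * ∏ j, Δ' j) :
    m = n + 1 := by
  have hd : ∀ i, (Δ i).coeff 0 = 1 ∧ (Δ i).coeff 1 = -1 :=
    fun i => delta_coeffs (hp i) (hpq i) _ (hΔ i)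
  have hd' : ∀ j, (Δ' j).coeff 0 = 1 ∧ (Δ' j).coeff 1 = -1 :=
    fun j => delta_coeffs (hp' j) (hpq' j) _ (hΔ' j)
  obtain ⟨L0, L1⟩ := prod_coeffs Finset.univ Δ (fun i _ => (hd i).1)
  obtain ⟨R0, R1⟩ := prod_coeffs Finset.univ Δ' (fun j _ => (hd' j).1)
  have hsum : (∏ i, Δ i).coeff 1 = -(m : ℤ) := by
    rw [L1]; simp [(hd _).2]
  have hsum' : (∏ j, Δ' j).coeff 1 = -(n : ℤ) := by
    rw [R1]; simp [(hd' _).2]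
  have key : (-(m : ℤ)) = -((n : ℤ) + 1) := by
    have := congrArg (fun f => Polynomial.coeff f 1) heq
    rw [hsum, coeff1_mul, hP0, hP1, R0, hsum'] at this
    linarith
  have : (m : ℤ) = (n : ℤ) + 1 := by linarith
  exact_mod_cast this
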